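/- Let q be a prime power and let s ≥ 0 be a real number such that every nontrivial blocking set in ℙ²(F_q) has at least q+1+s points. Let F, G ∈ F_q[x,y,z] be two homogeneous polynomials of the same degree with no common zero v ≠ 0 in F_q³, and suppose that no F_q-member C_{[s:t]} of the pencil has C_{[s:t]}(F_q) containing all q+1 points of some F_q-line. Then the number m of points [s:t] ∈ ℙ¹(F_q) for which C_{[s:t]}(F_q) is a blocking set satisfies m·(q+1+s) ≤ q²+q+1. -/
import Mathlib


open MvPolynomial

/-- The `F_q`-line in `ℙ²(F_q)` with (dual) coefficient vector `a`. -/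
def projLine (F : Type*) [Field F] (a : Fin 3 → F) :
    Set (Projectivization F (Fin 3 → F)) :=
  {P | ∑ i, a i * P.rep i = 0}

/-- A set of points of `ℙ²(F_q)` is a blocking set if it meets every `F_q`-line. -/
def IsBlockingSet (F : Type*) [Field F] (B : Set (Projectivization F (Fin 3 → F))) : Prop :=
  ∀ a : Fin 3 → F, a ≠ 0 → (B ∩ projLine F a).Nonempty

/-- The set of `F_q`-points of the member of the pencil `⟨P₁, P₂⟩` at `[s:t] ∈ ℙ¹(F_q)`. -/
def pencilMember (F : Type*) [Field F] (P₁ P₂ : MvPolynomial (Fin 3) F)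
    (st : Projectivization F (Fin 2 → F)) :
    Set (Projectivization F (Fin 3 → F)) :=
  {P | st.rep 0 * eval P.rep P₁ + st.rep 1 * eval P.rep P₂ = 0}

/-- **Counting argument in Proposition 3.2.** Suppose every nontrivial blocking set in
`ℙ²(F_q)` has at least `q+1+s` points. If no member of the pencil contains all points of a
line, then the number `m` of blocking members satisfies `m(q+1+s) ≤ q²+q+1`. -/
lemma fiber_card {F : Type*} [Field F] [Fintype F] {V : Type*} [AddCommGroup V] [Module F V]
    (P : Projectivization F V) :
    Nat.card {v : {w : V // w ≠ 0} // Projectivization.mk' F v = P} = Fintype.card F - 1 := by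
  classical
  have hrep := P.rep_nonzero
  have hb : Function.Bijective (fun a : Fˣ =>
      (⟨⟨(a : F) • P.rep, smul_ne_zero a.ne_zero hrep⟩, by
        rw [Projectivization.mk'_eq_mk]
        conv_rhs => rw [← P.mk_rep]
        exact (Projectivization.mk_eq_mk_iff F _ _ _ _).2 ⟨a, rfl⟩⟩ :
      {v : {w : V // w ≠ 0} // Projectivization.mk' F v = P})) := by
    constructor
    · intro a b hab
      have : (a : F) • P.rep = (b : F) • P.rep := by
        simpa [Subtype.ext_iff] using hab
      exact Units.ext (smul_left_injective F hrep this)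
    · rintro ⟨⟨v, hv⟩, hmk⟩
      rw [Projectivization.mk'_eq_mk] at hmk
      obtain ⟨a, ha⟩ := (Projectivization.mk_eq_mk_iff F v P.rep hv hrep).1
        (hmk.trans P.mk_rep.symm)
      exact ⟨a, Subtype.ext (Subtype.ext ha)⟩
  rw [← Nat.card_eq_of_bijective _ hb, Nat.card_eq_fintype_card, Fintype.card_units]

lemma card_proj3 (F : Type*) [Field F] [Fintype F] :
    Nat.card (Projectivization F (Fin 3 → F)) =
      Fintype.card F ^ 2 + Fintype.card F + 1 := by
  classical
  obtain ⟨k, hk⟩ : ∃ k, Fintype.card F = k + 2 :=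
    ⟨Fintype.card F - 2, by have := Fintype.one_lt_card (α := F); omega⟩
  haveI : Finite (Projectivization F (Fin 3 → F)) := Quotient.finite _
  letI : Fintype (Projectivization F (Fin 3 → F)) := Fintype.ofFinite _
  have h1 : Nat.card {v : Fin 3 → F // v ≠ 0} = Fintype.card F ^ 3 - 1 := by
    rw [Nat.card_eq_fintype_card, Fintype.card_subtype_compl, Fintype.card_subtype_eq]
    congr 1
    simp [Fintype.card_fun]
  have h3 : Nat.card {v : Fin 3 → F // v ≠ 0} =
      Nat.card (Projectivization F (Fin 3 → F)) * (Fintype.card F - 1) := by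
    letI : ∀ P : Projectivization F (Fin 3 → F),
        Fintype {v : {w : Fin 3 → F // w ≠ 0} // Projectivization.mk' F v = P} :=
      fun _ => Fintype.ofFinite _
    rw [Nat.card_congr (Equiv.sigmaFiberEquiv (Projectivization.mk' F)).symm,
      Nat.card_eq_fintype_card, Fintype.card_sigma]
    rw [Nat.card_eq_fintype_card]
    rw [Finset.sum_congr rfl (fun P _ => by
      rw [← Nat.card_eq_fintype_card, fiber_card P])]
    simp [Finset.sum_const, mul_comm]
  rw [h1] at h3
  have h4 : (Fintype.card F ^ 2 + Fintype.card F + 1) * (Fintype.card F - 1) =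
      Fintype.card F ^ 3 - 1 := by
    rw [hk, show k + 2 - 1 = k + 1 from rfl]
    have : (k + 2) ^ 3 = ((k + 2) ^ 2 + (k + 2) + 1) * (k + 1) + 1 := by ring
    omega
  rw [← h4] at h3
  have hq1 : 0 < Fintype.card F - 1 := by omega
  exact (Nat.eq_of_mul_eq_mul_right hq1 h3.symm)

open MvPolynomial

lemma pencil_disjoint {F : Type*} [Field F] (P₁ P₂ : MvPolynomial (Fin 3) F)
    (hbase : ∀ v : Fin 3 → F, v ≠ 0 → ¬(eval v P₁ = 0 ∧ eval v P₂ = 0))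
    {st st' : Projectivization F (Fin 2 → F)} (h : st ≠ st') :
    Disjoint (pencilMember F P₁ P₂ st) (pencilMember F P₁ P₂ st') := by
  rw [Set.disjoint_left]
  intro P hP hP'
  set a := st.rep with ha
  set b := st'.rep with hb
  set x := eval P.rep P₁
  set y := eval P.rep P₂
  have eq1 : a 0 * x + a 1 * y = 0 := hP
  have eq2 : b 0 * x + b 1 * y = 0 := hP'
  have hne : a 0 * b 1 - a 1 * b 0 ≠ 0 := by
    intro hd
    apply h
    conv_lhs => rw [← st.mk_rep]
    conv_rhs => rw [← st'.mk_rep]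
    rw [Projectivization.mk_eq_mk_iff']
    have hd' : a 0 * b 1 = a 1 * b 0 := by linear_combination hd
    have hbne := st'.rep_nonzero
    have hane := st.rep_nonzero
    rcases eq_or_ne (b 0) 0 with hb0 | hb0
    · have hb1 : b 1 ≠ 0 := by
        intro hb1
        apply hbne
        funext i
        fin_cases i <;> assumption
      have ha0 : a 0 = 0 := by
        have : a 0 * b 1 = 0 := by rw [hd', hb0, mul_zero]
        exact (mul_eq_zero.1 this).resolve_right hb1
      refine ⟨a 1 / b 1, funext fun i => ?_⟩
      fin_cases i
      · show a 1 / b 1 * b 0 = a 0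
        rw [hb0, ha0, mul_zero]
      · show a 1 / b 1 * b 1 = a 1
        field_simp
    · refine ⟨a 0 / b 0, funext fun i => ?_⟩
      fin_cases i
      · show a 0 / b 0 * b 0 = a 0
        field_simp
      · show a 0 / b 0 * b 1 = a 1
        field_simp
        linear_combination hd'
  have hx : x = 0 := by
    have h5 : (a 0 * b 1 - a 1 * b 0) * x =
        b 1 * (a 0 * x + a 1 * y) - a 1 * (b 0 * x + b 1 * y) := by ring
    rw [eq1, eq2] at h5
    simpa [hne] using h5
  have hy : y = 0 := by
    have h5 : (a 0 * b 1 - a 1 * b 0) * y =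
        a 0 * (b 0 * x + b 1 * y) - b 0 * (a 0 * x + a 1 * y) := by ring
    rw [eq1, eq2] at h5
    simpa [hne] using h5
  exact hbase P.rep P.rep_nonzero ⟨hx, hy⟩


open MvPolynomial


theorem stmt_14 (F : Type*) [Field F] [Fintype F] (s : ℝ) (hs : 0 ≤ s)
    (hblocking : ∀ B : Set (Projectivization F (Fin 3 → F)),
      IsBlockingSet F B →
      (¬ ∃ a : Fin 3 → F, a ≠ 0 ∧ projLine F a ⊆ B) →
      (Fintype.card F + 1 + s : ℝ) ≤ B.ncard)
    (d : ℕ) (P₁ P₂ : MvPolynomial (Fin 3) F)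
    (h₁ : P₁.IsHomogeneous d) (h₂ : P₂.IsHomogeneous d)
    (hbase : ∀ v : Fin 3 → F, v ≠ 0 → ¬(eval v P₁ = 0 ∧ eval v P₂ = 0))
    (hnotriv : ∀ st : Projectivization F (Fin 2 → F),
      ¬ ∃ a : Fin 3 → F, a ≠ 0 ∧ projLine F a ⊆ pencilMember F P₁ P₂ st) :
    (({st : Projectivization F (Fin 2 → F) |
        IsBlockingSet F (pencilMember F P₁ P₂ st)}.ncard : ℝ)) *
      (Fintype.card F + 1 + s) ≤
      (Fintype.card F : ℝ) ^ 2 + Fintype.card F + 1 := by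
  classical
  haveI : Finite (Projectivization F (Fin 2 → F)) := Quotient.finite _
  haveI : Finite (Projectivization F (Fin 3 → F)) := Quotient.finite _
  letI : Fintype (Projectivization F (Fin 3 → F)) := Fintype.ofFinite _
  set S : Set (Projectivization F (Fin 2 → F)) :=
    {st | IsBlockingSet F (pencilMember F P₁ P₂ st)} with hS
  have hSfin : S.Finite := Set.toFinite _
  set T := hSfin.toFinset with hT
  set C : Projectivization F (Fin 2 → F) → Finset (Projectivization F (Fin 3 → F)) :=
    fun st => (Set.toFinite (pencilMember F P₁ P₂ st)).toFinset with hC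
  have hcard : ∀ st, (pencilMember F P₁ P₂ st).ncard = (C st).card := fun st =>
    Set.ncard_eq_toFinset_card _ _
  have hsum : ∑ st ∈ T, (C st).card ≤ Fintype.card (Projectivization F (Fin 3 → F)) := by
    rw [← Finset.card_biUnion]
    · exact Finset.card_le_univ _
    · intro a _ b _ hab
      rw [hC]
      simp only [Set.Finite.disjoint_toFinset]
      exact pencil_disjoint P₁ P₂ hbase hab
  have hcard3 : (Fintype.card (Projectivization F (Fin 3 → F)) : ℝ) =
      (Fintype.card F : ℝ) ^ 2 + Fintype.card F + 1 := by
    rw [← Nat.card_eq_fintype_card, card_proj3]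
    push_cast
    ring
  calc (S.ncard : ℝ) * (Fintype.card F + 1 + s)
      = ∑ _st ∈ T, ((Fintype.card F : ℝ) + 1 + s) := by
        rw [Finset.sum_const, Set.ncard_eq_toFinset_card S hSfin, nsmul_eq_mul]
    _ ≤ ∑ st ∈ T, ((C st).card : ℝ) := by
        refine Finset.sum_le_sum fun st hst => ?_
        rw [← hcard st]
        exact hblocking _ (hSfin.mem_toFinset.1 hst) (hnotriv st)
    _ = ((∑ st ∈ T, (C st).card : ℕ) : ℝ) := by push_cast; ring
    _ ≤ (Fintype.card (Projectivization F (Fin 3 → F)) : ℝ) := by exact_mod_cast hsum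
    _ = _ := hcard3
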